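/- Suppose φ₁, φ₂ ∈ 𝒢 satisfy K_{φ₁} = K_{φ₂}. Then there is a homeomorphism g of [0,1] onto itself which maps D onto D and satisfies φ₂(d) = φ₁(g(d)) for all d ∈ D. -/

import Mathlib

open Set MeasureTheory

/-- The set `D` of dyadic rationals in `(0,1)`. -/
def dyadics : Set ℝ :=
  {x : ℝ | ∃ i k : ℕ, 0 < i ∧ 0 < k ∧ i < 2 ^ k ∧ x = (i : ℝ) / 2 ^ k}

/-- `φ ∈ 𝒢`: a "gap function", i.e. `φ : D → (0,1)` with `∑_{d ∈ D} φ d = 1`. -/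
def IsGapFun (φ : ℝ → ℝ) : Prop :=
  (∀ d ∈ dyadics, φ d ∈ Set.Ioo (0 : ℝ) 1) ∧ HasSum (fun d : dyadics => φ d) 1

/-- `Φ(d) = ∑_{d' ∈ D, d' < d} φ(d')`. -/
noncomputable def PhiFun (φ : ℝ → ℝ) (d : ℝ) : ℝ :=
  ∑' d' : ↥(dyadics ∩ Set.Iio d), φ d'

/-- `K_φ = [0,1] \ ⋃_{d ∈ D} (Φ(d), Φ(d) + φ(d))`. -/
noncomputable def Kset (φ : ℝ → ℝ) : Set ℝ :=
  Set.Icc 0 1 \ ⋃ d ∈ dyadics, Set.Ioo (PhiFun φ d) (PhiFun φ d + φ d)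

/-- If `φ₁, φ₂ ∈ 𝒢` satisfy `K_{φ₁} = K_{φ₂}`, then there is a homeomorphism
`g` of `[0,1]` onto itself (a continuous bijection of the compact set `[0,1]` onto itself,
hence a homeomorphism) mapping `D` onto `D` with `φ₂ = φ₁ ∘ g` on `D`. -/
lemma dyadics_subset_Ioo : dyadics ⊆ Set.Ioo (0:ℝ) 1 := by
  rintro x ⟨i, k, hi, hk, hik, rfl⟩
  have h2 : (0:ℝ) < 2 ^ k := by positivity
  constructor
  · positivity
  · rw [div_lt_one h2]
    exact_mod_cast hik

lemma dyadics_dense {a b : ℝ} (ha : 0 ≤ a) (hb : b ≤ 1) (hab : a < b) :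
    ∃ e ∈ dyadics, e ∈ Set.Ioo a b := by
  obtain ⟨k, hk⟩ := pow_unbounded_of_one_lt (R := ℝ) (b - a)⁻¹ (by norm_num : (1:ℝ) < 2)
  have hba : (0:ℝ) < b - a := by linarith
  have h2k : (0:ℝ) < 2 ^ k := by positivity
  have hklt : (1:ℝ) / 2 ^ k < b - a := by
    rw [div_lt_iff₀ h2k, ← div_lt_iff₀' hba]
    simpa [one_div] using hk
  set i : ℕ := ⌊a * 2 ^ k⌋.toNat + 1 with hidef
  have hfl : (0:ℤ) ≤ ⌊a * 2 ^ k⌋ := Int.floor_nonneg.2 (by positivity)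
  have hicast : (i : ℝ) = (⌊a * 2 ^ k⌋ : ℝ) + 1 := by
    have h : ((⌊a * 2 ^ k⌋.toNat : ℕ) : ℝ) = ((⌊a * 2 ^ k⌋ : ℤ) : ℝ) := by
      exact_mod_cast congrArg (Int.cast : ℤ → ℝ) (Int.toNat_of_nonneg hfl)
    rw [hidef]
    push_cast
    rw [h]
  have hgt : a < (i:ℝ) / 2 ^ k := by
    rw [lt_div_iff₀ h2k, hicast]
    exact Int.lt_floor_add_one _
  have hlt : (i:ℝ) / 2 ^ k < b := by
    rw [div_lt_iff₀ h2k, hicast]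
    have := Int.floor_le (a * 2 ^ k)
    have : (⌊a * 2 ^ k⌋ : ℝ) + 1 ≤ a * 2 ^ k + 1 := by linarith
    have hrw : a * 2 ^ k + 1 < b * 2 ^ k := by
      have := hklt
      rw [div_lt_iff₀ h2k] at this
      nlinarith
    linarith
  have hk0 : 0 < k := by
    by_contra h
    have : k = 0 := by omega
    subst this
    simp at hklt
    linarith
  refine ⟨(i:ℝ) / 2 ^ k, ⟨i, k, by omega, hk0, ?_, by norm_num⟩, hgt, hlt⟩
  · have : (i:ℝ) < 2 ^ k := by
      calc (i:ℝ) = ((i:ℝ)/2^k) * 2^k := by field_simp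
      _ < b * 2 ^ k := by exact mul_lt_mul_of_pos_right hlt h2k
      _ ≤ 1 * 2 ^ k := by nlinarith
      _ = 2 ^ k := by ring
    exact_mod_cast this

section PhiLemmas

variable {φ : ℝ → ℝ}

lemma gap_nonneg (hφ : IsGapFun φ) : ∀ x, 0 ≤ dyadics.indicator φ x := by
  intro x
  by_cases hx : x ∈ dyadics
  · rw [Set.indicator_of_mem hx]; exact le_of_lt (hφ.1 x hx).1
  · rw [Set.indicator_of_notMem hx]

lemma gap_summable (hφ : IsGapFun φ) : Summable (dyadics.indicator φ) := by
  rw [← summable_subtype_iff_indicator]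
  exact hφ.2.summable

lemma gap_tsum (hφ : IsGapFun φ) : ∑' x, dyadics.indicator φ x = 1 := by
  rw [← tsum_subtype]
  exact hφ.2.tsum_eq

lemma sub_summable (hφ : IsGapFun φ) {s : Set ℝ} (hs : s ⊆ dyadics) : Summable (s.indicator φ) := by
  refine Summable.of_nonneg_of_le (fun x => ?_) (fun x => ?_) (gap_summable hφ)
  · by_cases hx : x ∈ s
    · rw [Set.indicator_of_mem hx]; exact le_of_lt (hφ.1 x (hs hx)).1
    · rw [Set.indicator_of_notMem hx]
  · by_cases hx : x ∈ s
    · rw [Set.indicator_of_mem hx, Set.indicator_of_mem (hs hx)]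
    · rw [Set.indicator_of_notMem hx]; exact gap_nonneg hφ x

lemma Phi_eq (d : ℝ) : PhiFun φ d = ∑' x, (dyadics ∩ Set.Iio d).indicator φ x :=
  tsum_subtype _ _

lemma Phi_nonneg (hφ : IsGapFun φ) (d : ℝ) : 0 ≤ PhiFun φ d := by
  rw [Phi_eq]
  refine tsum_nonneg fun x => ?_
  by_cases hx : x ∈ dyadics ∩ Set.Iio d
  · rw [Set.indicator_of_mem hx]; exact le_of_lt (hφ.1 x hx.1).1
  · rw [Set.indicator_of_notMem hx]

lemma sub_tsum_le (hφ : IsGapFun φ) {s t : Set ℝ} (hs : s ⊆ t) (ht : t ⊆ dyadics) :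
    ∑' x, s.indicator φ x ≤ ∑' x, t.indicator φ x := by
  refine Summable.tsum_le_tsum (fun x => ?_) (sub_summable hφ (hs.trans ht)) (sub_summable hφ ht)
  by_cases hx : x ∈ s
  · rw [Set.indicator_of_mem hx, Set.indicator_of_mem (hs hx)]
  · rw [Set.indicator_of_notMem hx]
    by_cases hx2 : x ∈ t
    · rw [Set.indicator_of_mem hx2]; exact le_of_lt (hφ.1 x (ht hx2)).1
    · rw [Set.indicator_of_notMem hx2]

lemma Phi_mono (hφ : IsGapFun φ) {d e : ℝ} (h : d ≤ e) : PhiFun φ d ≤ PhiFun φ e := by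
  rw [Phi_eq, Phi_eq]
  exact sub_tsum_le hφ (Set.inter_subset_inter_right _ (Set.Iio_subset_Iio h))
    Set.inter_subset_left

lemma Phi_add_eq (hφ : IsGapFun φ) {d : ℝ} (hd : d ∈ dyadics) :
    PhiFun φ d + φ d = ∑' x, (dyadics ∩ Set.Iic d).indicator φ x := by
  have hsplit : (dyadics ∩ Set.Iic d) = (dyadics ∩ Set.Iio d) ∪ {d} := by
    ext x
    simp only [Set.mem_inter_iff, Set.mem_Iic, Set.mem_Iio, Set.mem_union, Set.mem_singleton_iff]
    constructor
    · rintro ⟨hx, hxd⟩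
      rcases lt_or_eq_of_le hxd with h | h
      · exact Or.inl ⟨hx, h⟩
      · exact Or.inr h
    · rintro (⟨hx, hxd⟩ | rfl)
      · exact ⟨hx, le_of_lt hxd⟩
      · exact ⟨hd, le_refl _⟩
  have hdisj : Disjoint (dyadics ∩ Set.Iio d) {d} := by
    simp only [Set.disjoint_singleton_right, Set.mem_inter_iff, Set.mem_Iio]
    rintro ⟨-, h⟩; exact lt_irrefl d h
  have hsing : HasSum (Set.indicator {d} φ) (φ d) := by
    have : Set.indicator {d} φ = fun x => if x = d then φ d else 0 := by
      funext x
      by_cases hx : x = d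
      · subst hx; simp
      · simp [Set.indicator_of_notMem, hx]
    rw [this]
    exact hasSum_ite_eq d (φ d)
  rw [hsplit, Set.indicator_union_of_disjoint hdisj]
  rw [Phi_eq]
  rw [Summable.tsum_add (sub_summable hφ Set.inter_subset_left) hsing.summable, hsing.tsum_eq]

lemma Phi_add_le_Phi (hφ : IsGapFun φ) {d e : ℝ} (hd : d ∈ dyadics) (hde : d < e) :
    PhiFun φ d + φ d ≤ PhiFun φ e := by
  rw [Phi_add_eq hφ hd, Phi_eq]
  refine sub_tsum_le hφ (Set.inter_subset_inter_right _ ?_) Set.inter_subset_left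
  exact fun x hx => lt_of_le_of_lt hx hde

lemma Phi_add_le_one (hφ : IsGapFun φ) {d : ℝ} (hd : d ∈ dyadics) : PhiFun φ d + φ d ≤ 1 := by
  rw [Phi_add_eq hφ hd, ← gap_tsum hφ]
  exact sub_tsum_le hφ Set.inter_subset_left (fun x hx => hx)

lemma Phi_lt_Phi (hφ : IsGapFun φ) {d e : ℝ} (hd : d ∈ dyadics) (hde : d < e) : PhiFun φ d < PhiFun φ e :=
  lt_of_lt_of_le (by linarith [(hφ.1 d hd).1]) (Phi_add_le_Phi hφ hd hde)

lemma Phi_inj (hφ : IsGapFun φ) {d e : ℝ} (hd : d ∈ dyadics) (he : e ∈ dyadics)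
    (h : PhiFun φ d = PhiFun φ e) : d = e := by
  rcases lt_trichotomy d e with hlt | heq | hgt
  · exact absurd h (ne_of_lt (Phi_lt_Phi hφ hd hlt))
  · exact heq
  · exact absurd h.symm (ne_of_lt (Phi_lt_Phi hφ he hgt))

end PhiLemmas

section KsetLemmas

variable {φ : ℝ → ℝ}

lemma mem_Kset_iff {x : ℝ} : x ∈ Kset φ ↔ x ∈ Set.Icc (0:ℝ) 1 ∧
    ∀ d ∈ dyadics, x ∉ Set.Ioo (PhiFun φ d) (PhiFun φ d + φ d) := by
  simp only [Kset, Set.mem_diff, Set.mem_iUnion, Set.mem_Ioo, not_exists]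

lemma Phi_mem_Kset (hφ : IsGapFun φ) {d : ℝ} (hd : d ∈ dyadics) : PhiFun φ d ∈ Kset φ := by
  rw [mem_Kset_iff]
  constructor
  · exact ⟨Phi_nonneg hφ d, le_trans (by linarith [(hφ.1 d hd).1]) (Phi_add_le_one hφ hd)⟩
  · intro e he hmem
    rcases lt_or_ge e d with hlt | hle
    · have := Phi_add_le_Phi hφ he hlt
      have h2 := hmem.2
      linarith [(hφ.1 e he).1]
    · exact absurd hmem.1 (not_lt.2 (Phi_mono hφ hle))

lemma Phi_add_mem_Kset (hφ : IsGapFun φ) {d : ℝ} (hd : d ∈ dyadics) :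
    PhiFun φ d + φ d ∈ Kset φ := by
  rw [mem_Kset_iff]
  constructor
  · exact ⟨le_trans (Phi_nonneg hφ d) (by linarith [(hφ.1 d hd).1]), Phi_add_le_one hφ hd⟩
  · intro e he hmem
    rcases lt_trichotomy e d with hlt | rfl | hgt
    · have : PhiFun φ e + φ e ≤ PhiFun φ d := Phi_add_le_Phi hφ he hlt
      have : PhiFun φ e + φ e ≤ PhiFun φ d + φ d := by linarith [(hφ.1 d hd).1]
      exact absurd hmem.2 (not_lt.2 this)
    · exact absurd hmem.2 (lt_irrefl _)
    · exact absurd hmem.1 (not_lt.2 (Phi_add_le_Phi hφ hd hgt))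

end KsetLemmas

section Match

/-- For each dyadic `d`, the gap of `φ₂` at `d` equals the gap of `φ₁` at some dyadic. -/
lemma exists_match {φ₁ φ₂ : ℝ → ℝ} (h₁ : IsGapFun φ₁) (h₂ : IsGapFun φ₂)
    (hK : Kset φ₁ = Kset φ₂) {d : ℝ} (hd : d ∈ dyadics) :
    ∃ e ∈ dyadics, PhiFun φ₁ e = PhiFun φ₂ d ∧ φ₁ e = φ₂ d := by
  set m := PhiFun φ₂ d + φ₂ d / 2 with hm
  have hφd := (h₂.1 d hd).1
  have hmlo : PhiFun φ₂ d < m := by simp [hm]; linarith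
  have hmhi : m < PhiFun φ₂ d + φ₂ d := by simp [hm]; linarith
  have hmnotK : m ∉ Kset φ₂ := by
    rw [mem_Kset_iff]
    push_neg
    intro _
    exact ⟨d, hd, hmlo, hmhi⟩
  have hm01' : m ∈ Set.Icc (0:ℝ) 1 := by
    constructor
    · linarith [Phi_nonneg h₂ d]
    · linarith [Phi_add_le_one h₂ hd]
  have hmU : m ∈ ⋃ e ∈ dyadics, Set.Ioo (PhiFun φ₁ e) (PhiFun φ₁ e + φ₁ e) := by
    by_contra hcon
    exact (hK ▸ hmnotK) ⟨hm01', hcon⟩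
  simp only [Set.mem_iUnion, Set.mem_Ioo] at hmU
  obtain ⟨e, he, hlo, hhi⟩ := hmU
  -- left endpoints agree
  have hP2K : PhiFun φ₂ d ∈ Kset φ₁ := hK ▸ (hK.symm ▸ Phi_mem_Kset h₂ hd)
  have hP1K : PhiFun φ₁ e ∈ Kset φ₂ := hK ▸ Phi_mem_Kset h₁ he
  have hl1 : PhiFun φ₂ d ≤ PhiFun φ₁ e := by
    by_contra hcon
    push_neg at hcon
    exact ((mem_Kset_iff.1 hP2K).2 e he) ⟨hcon, lt_trans hmlo hhi⟩
  have hl2 : PhiFun φ₁ e ≤ PhiFun φ₂ d := by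
    by_contra hcon
    push_neg at hcon
    exact ((mem_Kset_iff.1 hP1K).2 d hd) ⟨hcon, lt_trans hlo hmhi⟩
  have hleq : PhiFun φ₁ e = PhiFun φ₂ d := le_antisymm hl2 hl1
  -- right endpoints agree
  have hP2K' : PhiFun φ₂ d + φ₂ d ∈ Kset φ₁ := hK ▸ (hK.symm ▸ Phi_add_mem_Kset h₂ hd)
  have hP1K' : PhiFun φ₁ e + φ₁ e ∈ Kset φ₂ := hK ▸ Phi_add_mem_Kset h₁ he
  have hr1 : PhiFun φ₁ e + φ₁ e ≤ PhiFun φ₂ d + φ₂ d := by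
    by_contra hcon
    push_neg at hcon
    exact ((mem_Kset_iff.1 hP2K').2 e he) ⟨lt_trans hlo hmhi, hcon⟩
  have hr2 : PhiFun φ₂ d + φ₂ d ≤ PhiFun φ₁ e + φ₁ e := by
    by_contra hcon
    push_neg at hcon
    exact ((mem_Kset_iff.1 hP1K').2 d hd) ⟨lt_trans hmlo hhi, hcon⟩
  exact ⟨e, he, hleq, by linarith⟩

end Match

section Extension

open scoped Classical in
/-- Matching function: sends `d` to the dyadic whose `φ₁`-gap equals the `φ₂`-gap of `d`. -/
noncomputable def matchFun (φ₁ φ₂ : ℝ → ℝ) (d : ℝ) : ℝ :=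
  if h : ∃ e ∈ dyadics, PhiFun φ₁ e = PhiFun φ₂ d ∧ φ₁ e = φ₂ d then h.choose else d

lemma matchFun_spec {φ₁ φ₂ : ℝ → ℝ} (h₁ : IsGapFun φ₁) (h₂ : IsGapFun φ₂)
    (hK : Kset φ₁ = Kset φ₂) {d : ℝ} (hd : d ∈ dyadics) :
    matchFun φ₁ φ₂ d ∈ dyadics ∧ PhiFun φ₁ (matchFun φ₁ φ₂ d) = PhiFun φ₂ d ∧
      φ₁ (matchFun φ₁ φ₂ d) = φ₂ d := by
  have h := exists_match h₁ h₂ hK hd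
  rw [matchFun]
  rw [dif_pos h]
  obtain ⟨he, hΦ, hφ⟩ := h.choose_spec
  exact ⟨he, hΦ, hφ⟩

/-- Monotone extension of a function defined on the dyadics. -/
noncomputable def extFun (f : ℝ → ℝ) (x : ℝ) : ℝ :=
  sSup (insert 0 (f '' (dyadics ∩ Set.Iic x)))

variable {f : ℝ → ℝ}

lemma extSet_subset (hf : ∀ d ∈ dyadics, f d ∈ dyadics) (x : ℝ) :
    insert 0 (f '' (dyadics ∩ Set.Iic x)) ⊆ Set.Icc (0:ℝ) 1 := by
  rintro y (rfl | ⟨d, ⟨hd, -⟩, rfl⟩)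
  · exact ⟨le_refl _, zero_le_one⟩
  · have := dyadics_subset_Ioo (hf d hd)
    exact ⟨le_of_lt this.1, le_of_lt this.2⟩

lemma extSet_bdd (hf : ∀ d ∈ dyadics, f d ∈ dyadics) (x : ℝ) :
    BddAbove (insert 0 (f '' (dyadics ∩ Set.Iic x))) :=
  BddAbove.mono (extSet_subset hf x) (bddAbove_Icc)

lemma extFun_nonneg (hf : ∀ d ∈ dyadics, f d ∈ dyadics) (x : ℝ) : 0 ≤ extFun f x :=
  le_csSup (extSet_bdd hf x) (Set.mem_insert _ _)

lemma extFun_le_one (hf : ∀ d ∈ dyadics, f d ∈ dyadics) (x : ℝ) : extFun f x ≤ 1 :=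
  csSup_le ⟨0, Set.mem_insert _ _⟩ (fun y hy => ((extSet_subset hf x) hy).2)

lemma le_extFun (hf : ∀ d ∈ dyadics, f d ∈ dyadics) {d x : ℝ} (hd : d ∈ dyadics)
    (hdx : d ≤ x) : f d ≤ extFun f x :=
  le_csSup (extSet_bdd hf x) (Set.mem_insert_of_mem _ ⟨d, ⟨hd, hdx⟩, rfl⟩)

lemma extFun_dyadic (hf : ∀ d ∈ dyadics, f d ∈ dyadics)
    (hmono : ∀ d ∈ dyadics, ∀ e ∈ dyadics, d < e → f d < f e)
    {d : ℝ} (hd : d ∈ dyadics) : extFun f d = f d := by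
  refine IsGreatest.csSup_eq ⟨Set.mem_insert_of_mem _ ⟨d, ⟨hd, Set.mem_Iic.2 le_rfl⟩, rfl⟩, ?_⟩
  rintro y (rfl | ⟨e, ⟨he, hed⟩, rfl⟩)
  · exact le_of_lt (dyadics_subset_Ioo (hf d hd)).1
  · rcases lt_or_eq_of_le (Set.mem_Iic.1 hed) with h | rfl
    · exact le_of_lt (hmono e he d hd h)
    · exact le_refl _

lemma extFun_strictMonoOn (hf : ∀ d ∈ dyadics, f d ∈ dyadics)
    (hmono : ∀ d ∈ dyadics, ∀ e ∈ dyadics, d < e → f d < f e) :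
    StrictMonoOn (extFun f) (Set.Icc (0:ℝ) 1) := by
  intro x hx y hy hxy
  obtain ⟨d, hd, hxd, hdy⟩ := dyadics_dense hx.1 hy.2 hxy
  obtain ⟨e, he, hde, hey⟩ := dyadics_dense (le_of_lt (dyadics_subset_Ioo hd).1) hy.2 hdy
  have h1 : extFun f x ≤ f d := by
    refine csSup_le ⟨0, Set.mem_insert _ _⟩ ?_
    rintro z (rfl | ⟨d', ⟨hd', hd'x⟩, rfl⟩)
    · exact le_of_lt (dyadics_subset_Ioo (hf d hd)).1
    · exact le_of_lt (hmono d' hd' d hd (lt_of_le_of_lt hd'x hxd))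
  have h2 : f e ≤ extFun f y := le_extFun hf he (le_of_lt hey)
  exact lt_of_le_of_lt h1 (lt_of_lt_of_le (hmono d hd e he hde) h2)

lemma extFun_comp {f' : ℝ → ℝ}
    (hf : ∀ d ∈ dyadics, f d ∈ dyadics) (hf' : ∀ d ∈ dyadics, f' d ∈ dyadics)
    (hmono : ∀ d ∈ dyadics, ∀ e ∈ dyadics, d < e → f d < f e)
    (hmono' : ∀ d ∈ dyadics, ∀ e ∈ dyadics, d < e → f' d < f' e)
    (hinv : ∀ d ∈ dyadics, f (f' d) = d)
    (hinv' : ∀ d ∈ dyadics, f' (f d) = d)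
    {t : ℝ} (ht : t ∈ Set.Icc (0:ℝ) 1) : extFun f (extFun f' t) = t := by
  refine le_antisymm ?_ ?_
  · refine csSup_le ⟨0, Set.mem_insert _ _⟩ ?_
    rintro z (rfl | ⟨d, ⟨hd, hdx⟩, rfl⟩)
    · exact ht.1
    · by_contra hcon
      push_neg at hcon
      obtain ⟨e, he, hte, hefd⟩ :=
        dyadics_dense ht.1 (le_of_lt (dyadics_subset_Ioo (hf d hd)).2) hcon
      have hub : extFun f' t ≤ f' e := by
        refine csSup_le ⟨0, Set.mem_insert _ _⟩ ?_
        rintro z (rfl | ⟨d', ⟨hd', hd't⟩, rfl⟩)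
        · exact le_of_lt (dyadics_subset_Ioo (hf' e he)).1
        · exact le_of_lt (hmono' d' hd' e he (lt_of_le_of_lt hd't hte))
      have : f' e < d := by
        have := hmono' e he (f d) (hf d hd) hefd
        rwa [hinv' d hd] at this
      linarith [le_trans hdx hub]
  · refine le_of_forall_lt fun s hs => ?_
    rcases lt_or_ge s 0 with hs0 | hs0
    · exact lt_of_lt_of_le hs0 (extFun_nonneg hf _)
    · obtain ⟨e, he, hse, het⟩ := dyadics_dense hs0 ht.2 hs
      have h1 : f' e ≤ extFun f' t := le_extFun hf' he (le_of_lt het)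
      have h2 : f (f' e) ≤ extFun f (extFun f' t) :=
        le_extFun hf (hf' e he) h1
      rw [hinv e he] at h2
      exact lt_of_lt_of_le hse h2

end Extension

theorem stmt_2 (φ₁ φ₂ : ℝ → ℝ) (h₁ : IsGapFun φ₁) (h₂ : IsGapFun φ₂)
    (hK : Kset φ₁ = Kset φ₂) :
    ∃ g : ℝ → ℝ, ContinuousOn g (Set.Icc 0 1) ∧
      Set.BijOn g (Set.Icc 0 1) (Set.Icc 0 1) ∧
      g '' dyadics = dyadics ∧
      ∀ d ∈ dyadics, φ₂ d = φ₁ (g d) := by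
  set f : ℝ → ℝ := matchFun φ₁ φ₂ with hfdef
  set f' : ℝ → ℝ := matchFun φ₂ φ₁ with hf'def
  have spec : ∀ d ∈ dyadics, f d ∈ dyadics ∧ PhiFun φ₁ (f d) = PhiFun φ₂ d ∧ φ₁ (f d) = φ₂ d :=
    fun d hd => matchFun_spec h₁ h₂ hK hd
  have spec' : ∀ d ∈ dyadics, f' d ∈ dyadics ∧ PhiFun φ₂ (f' d) = PhiFun φ₁ d ∧ φ₂ (f' d) = φ₁ d :=
    fun d hd => matchFun_spec h₂ h₁ hK.symm hd
  have hf : ∀ d ∈ dyadics, f d ∈ dyadics := fun d hd => (spec d hd).1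
  have hf' : ∀ d ∈ dyadics, f' d ∈ dyadics := fun d hd => (spec' d hd).1
  have hmono : ∀ d ∈ dyadics, ∀ e ∈ dyadics, d < e → f d < f e := by
    intro d hd e he hde
    have h : PhiFun φ₁ (f d) < PhiFun φ₁ (f e) := by
      rw [(spec d hd).2.1, (spec e he).2.1]
      exact Phi_lt_Phi h₂ hd hde
    by_contra hcon
    push_neg at hcon
    exact absurd h (not_lt.2 (Phi_mono h₁ hcon))
  have hmono' : ∀ d ∈ dyadics, ∀ e ∈ dyadics, d < e → f' d < f' e := by
    intro d hd e he hde
    have h : PhiFun φ₂ (f' d) < PhiFun φ₂ (f' e) := by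
      rw [(spec' d hd).2.1, (spec' e he).2.1]
      exact Phi_lt_Phi h₁ hd hde
    by_contra hcon
    push_neg at hcon
    exact absurd h (not_lt.2 (Phi_mono h₂ hcon))
  have hinv' : ∀ d ∈ dyadics, f' (f d) = d := by
    intro d hd
    refine Phi_inj h₂ (hf' _ (hf d hd)) hd ?_
    rw [(spec' _ (hf d hd)).2.1, (spec d hd).2.1]
  have hinv : ∀ d ∈ dyadics, f (f' d) = d := by
    intro d hd
    refine Phi_inj h₁ (hf _ (hf' d hd)) hd ?_
    rw [(spec _ (hf' d hd)).2.1, (spec' d hd).2.1]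
  set g : ℝ → ℝ := extFun f with hgdef
  set g' : ℝ → ℝ := extFun f' with hg'def
  have hmapsTo : Set.MapsTo g (Set.Icc 0 1) (Set.Icc 0 1) :=
    fun x _ => ⟨extFun_nonneg hf x, extFun_le_one hf x⟩
  have hmapsTo' : Set.MapsTo g' (Set.Icc 0 1) (Set.Icc 0 1) :=
    fun x _ => ⟨extFun_nonneg hf' x, extFun_le_one hf' x⟩
  have hsmono : StrictMonoOn g (Set.Icc 0 1) := extFun_strictMonoOn hf hmono
  have hcomp : ∀ t ∈ Set.Icc (0:ℝ) 1, g (g' t) = t :=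
    fun t ht => extFun_comp hf hf' hmono hmono' hinv hinv' ht
  have hsurjOn : Set.SurjOn g (Set.Icc 0 1) (Set.Icc 0 1) :=
    fun t ht => ⟨g' t, hmapsTo' ht, hcomp t ht⟩
  have hbij : Set.BijOn g (Set.Icc 0 1) (Set.Icc 0 1) :=
    ⟨hmapsTo, hsmono.injOn, hsurjOn⟩
  -- continuity
  have hcont : ContinuousOn g (Set.Icc 0 1) := by
    rw [continuousOn_iff_continuous_restrict]
    set G : Set.Icc (0:ℝ) 1 → Set.Icc (0:ℝ) 1 := fun x => ⟨g x, hmapsTo x.2⟩ with hGdef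
    have hGmono : StrictMono G := fun a b hab =>
      Subtype.mk_lt_mk.2 (hsmono a.2 b.2 (Subtype.coe_lt_coe.2 hab))
    have hGsurj : Function.Surjective G := by
      rintro ⟨t, ht⟩
      exact ⟨⟨g' t, hmapsTo' ht⟩, Subtype.ext (hcomp t ht)⟩
    have : Continuous G := by
      have := OrderIso.continuous (StrictMono.orderIsoOfSurjective G hGmono hGsurj)
      rwa [StrictMono.coe_orderIsoOfSurjective] at this
    have hrestr : (Set.Icc (0:ℝ) 1).restrict g = Subtype.val ∘ G := rfl
    change Continuous (Subtype.val ∘ G)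
    exact continuous_subtype_val.comp this
  -- image of dyadics
  have himg : g '' dyadics = dyadics := by
    ext y
    constructor
    · rintro ⟨x, hx, rfl⟩
      rw [hgdef, extFun_dyadic hf hmono hx]
      exact hf x hx
    · intro hy
      refine ⟨f' y, hf' y hy, ?_⟩
      rw [hgdef, extFun_dyadic hf hmono (hf' y hy), hinv y hy]
  refine ⟨g, hcont, hbij, himg, ?_⟩
  intro d hd
  rw [hgdef, extFun_dyadic hf hmono hd, (spec d hd).2.2]
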